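/- Let I be a finite set with |I| ≥ 2 and consider the system of equations, one for each bipartition {a, b} of I into two nonempty parts: Σ_{σ ⊆ I, |σ| even} x_σ ((-1)^{|σ ∩ a|} + (-1)^{|σ ∩ b|}) = 0, in the unknowns (x_σ) indexed by even-order subsets σ ⊆ I. Then the solution space is exactly the set of constant families, i.e. x_σ = x_∅ for all even σ ⊆ I. -/

import Mathlib

open Finset

private lemma negpow_eq_of_even_add (m n : ℕ) (h : Even (m + n)) :
    ((-1 : ℝ)) ^ m = (-1) ^ n := by
  have hiff := Nat.even_add.mp h
  rcases Nat.even_or_odd m with hm | hm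
  · rw [hm.neg_one_pow, (hiff.mp hm).neg_one_pow]
  · have hn : Odd n := Nat.not_even_iff_odd.mp
      (fun he => (Nat.not_odd_iff_even.mpr (hiff.mpr he)) hm)
    rw [hm.neg_one_pow, hn.neg_one_pow]

private lemma negpow_add_eq_zero (m n : ℕ) (h : Odd (m + n)) :
    ((-1 : ℝ)) ^ m + (-1) ^ n = 0 := by
  have hiff := Nat.odd_add.mp h
  rcases Nat.even_or_odd m with hm | hm
  · have hn : Odd n := by
      rcases Nat.even_or_odd n with h' | h'
      · exact absurd (hiff.mpr h') (Nat.not_odd_iff_even.mpr hm)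
      · exact h'
    rw [hm.neg_one_pow, hn.neg_one_pow]; ring
  · rw [hm.neg_one_pow, (hiff.mp hm).neg_one_pow]; ring

private lemma card_inter_add_card_inter_compl {I : Type*} [Fintype I] [DecidableEq I]
    (σ a : Finset I) : (σ ∩ a).card + (σ ∩ aᶜ).card = σ.card := by
  rw [show σ ∩ aᶜ = σ \ a from (sdiff_eq).symm]
  exact Finset.card_inter_add_card_sdiff σ a

private lemma card_symmDiff' {I : Type*} [DecidableEq I] (s t : Finset I) :
    (symmDiff s t).card + 2 * (s ∩ t).card = s.card + t.card := by
  have h1 : symmDiff s t = (s \ t) ∪ (t \ s) := by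
    rw [symmDiff_def]; rfl
  have h2 : (symmDiff s t).card = (s \ t).card + (t \ s).card := by
    rw [h1, Finset.card_union_of_disjoint disjoint_sdiff_sdiff]
  have h3 : (s \ t).card + (s ∩ t).card = s.card := Finset.card_sdiff_add_card_inter s t
  have h4 : (t \ s).card + (t ∩ s).card = t.card := Finset.card_sdiff_add_card_inter t s
  rw [Finset.inter_comm t s] at h4
  omega

private lemma sumB {I : Type*} [Fintype I] [DecidableEq I] (a : Finset I) :
    ∑ σ : Finset I, ((-1 : ℝ)) ^ (σ ∩ a).card
      = if a = ∅ then (2 : ℝ) ^ Fintype.card I else 0 := by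
  have h1 : ∀ σ : Finset I, ((-1 : ℝ)) ^ (σ ∩ a).card
      = ∏ i ∈ σ, (if i ∈ a then (-1 : ℝ) else 1) := by
    intro σ
    rw [Finset.prod_ite_mem σ a (fun _ => (-1 : ℝ)), Finset.prod_const]
  have h2 := Finset.prod_add (fun i => if i ∈ a then (-1 : ℝ) else 1)
      (fun _ => (1 : ℝ)) (Finset.univ : Finset I)
  simp only [Finset.prod_const_one, mul_one, Finset.powerset_univ] at h2
  calc ∑ σ : Finset I, ((-1 : ℝ)) ^ (σ ∩ a).card
      = ∑ σ : Finset I, ∏ i ∈ σ, (if i ∈ a then (-1 : ℝ) else 1) := by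
        exact Finset.sum_congr rfl fun σ _ => h1 σ
    _ = ∏ i : I, ((if i ∈ a then (-1 : ℝ) else 1) + 1) := h2.symm
    _ = if a = ∅ then (2 : ℝ) ^ Fintype.card I else 0 := by
        split_ifs with ha
        · subst ha
          simp only [Finset.notMem_empty, if_false]
          norm_num [Finset.card_univ]
        · obtain ⟨i, hi⟩ := Finset.nonempty_iff_ne_empty.mpr ha
          exact Finset.prod_eq_zero (Finset.mem_univ i) (by simp [hi])

private lemma orth {I : Type*} [Fintype I] [DecidableEq I] (σ τ : Finset I) :
    ∑ a : Finset I, ((-1 : ℝ)) ^ (σ ∩ a).card * (-1) ^ (τ ∩ a).card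
      = if σ = τ then (2 : ℝ) ^ Fintype.card I else 0 := by
  have key : ∀ a : Finset I, ((-1 : ℝ)) ^ (σ ∩ a).card * (-1) ^ (τ ∩ a).card
      = (-1) ^ (a ∩ symmDiff σ τ).card := by
    intro a
    rw [← pow_add]
    apply negpow_eq_of_even_add
    have hd := card_symmDiff' (σ ∩ a) (τ ∩ a)
    have h3 : a ∩ symmDiff σ τ = symmDiff (σ ∩ a) (τ ∩ a) := by
      rw [Finset.inter_comm]; exact inf_symmDiff_distrib_right σ τ a
    rw [h3]
    exact ⟨(symmDiff (σ ∩ a) (τ ∩ a)).card + ((σ ∩ a) ∩ (τ ∩ a)).card, by omega⟩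
  rw [Finset.sum_congr rfl fun a _ => key a, sumB (symmDiff σ τ)]
  congr 1
  simp [symmDiff_eq_bot, eq_iff_iff]

/-- The bipartition equations `Σ_{σ even} x_σ ((-1)^{|σ∩a|} + (-1)^{|σ∩b|}) = 0`, one for each
bipartition `{a, aᶜ}` of `I` into two nonempty parts, hold if and only if the family
`(x_σ)` is constant on even-order subsets. -/
theorem stmt_15 {I : Type*} [Fintype I] [DecidableEq I] (hI : 2 ≤ Fintype.card I)
    (x : Finset I → ℝ) :
    (∀ a : Finset I, a ≠ ∅ → a ≠ Finset.univ →
      ∑ σ ∈ Finset.univ.filter (fun σ : Finset I => Even σ.card),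
        x σ * ((-1 : ℝ) ^ (σ ∩ a).card + (-1 : ℝ) ^ (σ ∩ aᶜ).card) = 0)
    ↔ (∀ σ : Finset I, Even σ.card → x σ = x ∅) := by
  classical
  set E := Finset.univ.filter (fun σ : Finset I => Even σ.card) with hE
  have hmemE : ∀ σ : Finset I, σ ∈ E ↔ Even σ.card := by
    intro σ; simp [hE]
  -- for even σ, the two signs agree
  have hsame : ∀ σ a : Finset I, Even σ.card →
      ((-1 : ℝ)) ^ (σ ∩ aᶜ).card = (-1) ^ (σ ∩ a).card := by
    intro σ a hσ
    apply negpow_eq_of_even_add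
    rw [Nat.add_comm, card_inter_add_card_inter_compl]
    exact hσ
  have huniv_ne : (∅ : Finset I) ≠ Finset.univ := by
    have : Nonempty I := Fintype.card_pos_iff.mp (by omega)
    exact (Finset.univ_nonempty.ne_empty).symm
  constructor
  · intro h τ hτ
    set S := ∑ σ ∈ E, x σ with hS
    set G : Finset I → ℝ := fun a =>
      ∑ σ ∈ E, x σ * ((-1 : ℝ) ^ (σ ∩ a).card + (-1 : ℝ) ^ (σ ∩ aᶜ).card) with hG
    have hG0 : ∀ a, a ≠ ∅ → a ≠ Finset.univ → G a = 0 := h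
    have hGempty : G ∅ = 2 * S := by
      rw [hG, hS, Finset.mul_sum]
      refine Finset.sum_congr rfl fun σ hσ => ?_
      have hσe : Even σ.card := (hmemE σ).mp hσ
      simp [hσe.neg_one_pow]; ring
    have hGuniv : G Finset.univ = 2 * S := by
      rw [hG, hS, Finset.mul_sum]
      refine Finset.sum_congr rfl fun σ hσ => ?_
      have hσe : Even σ.card := (hmemE σ).mp hσ
      simp [hσe.neg_one_pow]; ring
    -- key identity: for any even τ', 2 * 2^n * x τ' = 4 * S
    have key : ∀ τ' : Finset I, Even τ'.card →
        2 * (2 : ℝ) ^ Fintype.card I * x τ' = 4 * S := by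
      intro τ' hτ'
      have hτ'E : τ' ∈ E := (hmemE τ').mpr hτ'
      have lhs : ∑ a : Finset I, G a * (-1) ^ (τ' ∩ a).card
          = 2 * (2 : ℝ) ^ Fintype.card I * x τ' := by
        have swap : ∑ a : Finset I, G a * (-1) ^ (τ' ∩ a).card
            = ∑ σ ∈ E, ∑ a : Finset I,
                x σ * ((-1 : ℝ) ^ (σ ∩ a).card + (-1 : ℝ) ^ (σ ∩ aᶜ).card)
                  * (-1) ^ (τ' ∩ a).card := by
          rw [Finset.sum_comm]
          refine Finset.sum_congr rfl fun a _ => ?_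
          rw [hG, Finset.sum_mul]
        rw [swap]
        have inner : ∀ σ ∈ E, (∑ a : Finset I,
            x σ * ((-1 : ℝ) ^ (σ ∩ a).card + (-1 : ℝ) ^ (σ ∩ aᶜ).card)
              * (-1) ^ (τ' ∩ a).card)
            = if σ = τ' then 2 * (2 : ℝ) ^ Fintype.card I * x σ else 0 := by
          intro σ hσ
          have hσe : Even σ.card := (hmemE σ).mp hσ
          have : ∀ a : Finset I,
              x σ * ((-1 : ℝ) ^ (σ ∩ a).card + (-1 : ℝ) ^ (σ ∩ aᶜ).card)
                * (-1) ^ (τ' ∩ a).card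
              = 2 * x σ * ((-1 : ℝ) ^ (σ ∩ a).card * (-1) ^ (τ' ∩ a).card) := by
            intro a; rw [hsame σ a hσe]; ring
          rw [Finset.sum_congr rfl fun a _ => this a, ← Finset.mul_sum, orth σ τ']
          split_ifs with hστ <;> ring
        rw [Finset.sum_congr rfl inner, Finset.sum_ite_eq' E τ'
          (fun σ => 2 * (2 : ℝ) ^ Fintype.card I * x σ), if_pos hτ'E]
      have rhs : ∑ a : Finset I, G a * (-1) ^ (τ' ∩ a).card = 4 * S := by
        have hvanish : ∀ a ∈ (Finset.univ : Finset (Finset I)),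
            a ∉ ({∅, Finset.univ} : Finset (Finset I)) →
            G a * (-1) ^ (τ' ∩ a).card = 0 := by
          intro a _ ha
          simp only [Finset.mem_insert, Finset.mem_singleton] at ha
          push_neg at ha
          rw [hG0 a (Finset.nonempty_iff_ne_empty.mp ha.1) ha.2, zero_mul]
        rw [← Finset.sum_subset (Finset.subset_univ ({∅, Finset.univ} : Finset (Finset I)))
          (fun a _ ha => hvanish a (Finset.mem_univ a) ha)]
        rw [Finset.sum_pair huniv_ne]
        rw [hGempty, hGuniv]
        simp [hτ'.neg_one_pow]
        ring
      rw [← lhs, rhs]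
    have h1 := key τ hτ
    have h2 := key ∅ (by simp)
    have hpow : (0 : ℝ) < 2 * (2 : ℝ) ^ Fintype.card I := by positivity
    have := h1.trans h2.symm
    exact mul_left_cancel₀ (ne_of_gt hpow) this
  · intro h a ha ha'
    have hconst : ∀ σ ∈ E, x σ * ((-1 : ℝ) ^ (σ ∩ a).card + (-1 : ℝ) ^ (σ ∩ aᶜ).card)
        = x ∅ * ((-1 : ℝ) ^ (σ ∩ a).card + (-1 : ℝ) ^ (σ ∩ aᶜ).card) := by
      intro σ hσ
      rw [h σ ((hmemE σ).mp hσ)]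
    rw [Finset.sum_congr rfl hconst, ← Finset.mul_sum]
    have hext : ∑ σ ∈ E, ((-1 : ℝ) ^ (σ ∩ a).card + (-1 : ℝ) ^ (σ ∩ aᶜ).card)
        = ∑ σ : Finset I, ((-1 : ℝ) ^ (σ ∩ a).card + (-1 : ℝ) ^ (σ ∩ aᶜ).card) := by
      apply Finset.sum_subset (Finset.subset_univ E)
      intro σ _ hσ
      have hodd : Odd σ.card := by
        rcases Nat.even_or_odd σ.card with h' | h'
        · exact absurd ((hmemE σ).mpr h') hσ
        · exact h'
      apply negpow_add_eq_zero
      rwa [card_inter_add_card_inter_compl]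
    rw [hext, Finset.sum_add_distrib, sumB a, sumB aᶜ, if_neg ha,
      if_neg (fun hc => ha' ((compl_eq_empty_iff a).mp hc))]
    ring
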